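/- arXiv:1605.00073 — 2 statements merged into one kernel-verified Lean document; each statement's English description precedes it below -/
import Mathlib

section
/- The map ω from G_{n,d}^2 to the quotient Q = G_{n+1}^2 / ⟨⟨a_{i(n+1)}a_{j(n+1)} = a_{j(n+1)}a_{i(n+1)} : i ≠ j⟩⟩ defined by ω(a_{ij}) = a_{ij} and ω(τ_i) = a_{i(n+1)} is a well-defined group homomorphism. -/
abbrev GenG (n : ℕ) := {p : Fin n × Fin n // p.1 < p.2}

def relsG (n : ℕ) : Set (FreeGroup (GenG n)) :=
  {r | (∃ a : GenG n, r = .of a * .of a) ∨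
    (∃ a b : GenG n, ({a.1.1, a.1.2, b.1.1, b.1.2} : Finset (Fin n)).card = 4 ∧
      r = .of a * .of b * (.of b * .of a)⁻¹) ∨
    (∃ i j k : Fin n, ∃ hij : i < j, ∃ hik : i < k, ∃ hjk : j < k,
      r = .of ⟨(i,j),hij⟩ * .of ⟨(i,k),hik⟩ * .of ⟨(j,k),hjk⟩ *
          (.of ⟨(j,k),hjk⟩ * .of ⟨(i,k),hik⟩ * .of ⟨(i,j),hij⟩)⁻¹)}

abbrev G2 (n : ℕ) := PresentedGroup (relsG n)

abbrev GenD (n : ℕ) := GenG n ⊕ Fin n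

def relsD (n : ℕ) : Set (FreeGroup (GenD n)) :=
  {r | (∃ a : GenG n, r = .of (.inl a) * .of (.inl a)) ∨
    (∃ a b : GenG n, ({a.1.1, a.1.2, b.1.1, b.1.2} : Finset (Fin n)).card = 4 ∧
      r = .of (.inl a) * .of (.inl b) * (.of (.inl b) * .of (.inl a))⁻¹) ∨
    (∃ i j k : Fin n, ∃ hij : i < j, ∃ hik : i < k, ∃ hjk : j < k,
      r = .of (.inl ⟨(i,j),hij⟩) * .of (.inl ⟨(i,k),hik⟩) * .of (.inl ⟨(j,k),hjk⟩) *
          (.of (.inl ⟨(j,k),hjk⟩) * .of (.inl ⟨(i,k),hik⟩) * .of (.inl ⟨(i,j),hij⟩))⁻¹) ∨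
    (∃ i : Fin n, r = .of (.inr i) * .of (.inr i)) ∨
    (∃ i j : Fin n, i ≠ j ∧ r = .of (.inr i) * .of (.inr j) * (.of (.inr j) * .of (.inr i))⁻¹) ∨
    (∃ i j : Fin n, ∃ h : i < j,
      r = .of (.inr i) * .of (.inr j) * .of (.inl ⟨(i,j),h⟩) * .of (.inr j) * .of (.inr i) *
          (.of (.inl ⟨(i,j),h⟩))⁻¹) ∨
    (∃ a : GenG n, ∃ k : Fin n, k ≠ a.1.1 ∧ k ≠ a.1.2 ∧
      r = .of (.inl a) * .of (.inr k) * (.of (.inr k) * .of (.inl a))⁻¹)}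

abbrev G2d (n : ℕ) := PresentedGroup (relsD n)

def embedGen (n : ℕ) (a : GenG n) : GenG (n+1) :=
  ⟨(a.1.1.castSucc, a.1.2.castSucc), Fin.castSucc_lt_castSucc_iff.mpr a.2⟩

def tauGen (n : ℕ) (i : Fin n) : GenG (n+1) := ⟨(i.castSucc, Fin.last n), Fin.castSucc_lt_last i⟩

def QRels (n : ℕ) : Set (G2 (n+1)) :=
  {x | ∃ i j : Fin n, i ≠ j ∧
    x = PresentedGroup.of (tauGen n i) * PresentedGroup.of (tauGen n j) *
        (PresentedGroup.of (tauGen n j) * PresentedGroup.of (tauGen n i))⁻¹}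

abbrev Qgrp (n : ℕ) := G2 (n+1) ⧸ Subgroup.normalClosure (QRels n)

lemma rel_one {α : Type*} {rels : Set (FreeGroup α)} {r : FreeGroup α} (h : r ∈ rels) :
    PresentedGroup.mk rels r = 1 :=
  (QuotientGroup.eq_one_iff r).mpr (Subgroup.subset_normalClosure h)

lemma qrel_one {n : ℕ} {x : G2 (n+1)} (h : x ∈ QRels n) :
    (QuotientGroup.mk x : Qgrp n) = 1 :=
  (QuotientGroup.eq_one_iff x).mpr (Subgroup.subset_normalClosure h)

lemma card4 {α : Type*} [DecidableEq α] {a b c d : α} (hab : a ≠ b) (hac : a ≠ c) (had : a ≠ d)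
    (hbc : b ≠ c) (hbd : b ≠ d) (hcd : c ≠ d) : ({a, b, c, d} : Finset α).card = 4 := by
  rw [Finset.card_insert_of_notMem (by simp [hab, hac, had]),
    Finset.card_insert_of_notMem (by simp [hbc, hbd]),
    Finset.card_insert_of_notMem (by simp [hcd]), Finset.card_singleton]

section helpers
variable {n : ℕ}

local notation "q" => (QuotientGroup.mk : G2 (n+1) → Qgrp n)

lemma sqG (a : GenG (n+1)) : (PresentedGroup.of a : G2 (n+1)) * PresentedGroup.of a = 1 := by
  have := rel_one (rels := relsG (n+1)) (Or.inl ⟨a, rfl⟩)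
  simpa [PresentedGroup.of] using this

lemma farG (a b : GenG (n+1))
    (h : ({a.1.1, a.1.2, b.1.1, b.1.2} : Finset (Fin (n+1))).card = 4) :
    (PresentedGroup.of a : G2 (n+1)) * PresentedGroup.of b =
      PresentedGroup.of b * PresentedGroup.of a := by
  have := rel_one (rels := relsG (n+1)) (Or.inr (Or.inl ⟨a, b, h, rfl⟩))
  simp only [map_mul, map_inv] at this
  group at this ⊢
  exact mul_inv_eq_one.mp (by simpa [mul_assoc, PresentedGroup.of] using this)

lemma tripleG {i j k : Fin (n+1)} (hij : i < j) (hik : i < k) (hjk : j < k) :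
    (PresentedGroup.of ⟨(i,j),hij⟩ : G2 (n+1)) * PresentedGroup.of ⟨(i,k),hik⟩ *
      PresentedGroup.of ⟨(j,k),hjk⟩ =
    PresentedGroup.of ⟨(j,k),hjk⟩ * PresentedGroup.of ⟨(i,k),hik⟩ *
      PresentedGroup.of ⟨(i,j),hij⟩ := by
  have := rel_one (rels := relsG (n+1)) (Or.inr (Or.inr ⟨i, j, k, hij, hik, hjk, rfl⟩))
  simp only [map_mul, map_inv] at this
  exact mul_inv_eq_one.mp (by simpa [mul_assoc, PresentedGroup.of] using this)

lemma tauComm {i j : Fin n} (hij : i ≠ j) :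
    q (PresentedGroup.of (tauGen n i)) * q (PresentedGroup.of (tauGen n j)) =
      q (PresentedGroup.of (tauGen n j)) * q (PresentedGroup.of (tauGen n i)) := by
  have := qrel_one (n := n) ⟨i, j, hij, rfl⟩
  rw [QuotientGroup.mk_mul, QuotientGroup.mk_mul, QuotientGroup.mk_inv, QuotientGroup.mk_mul,
    mul_inv_eq_one] at this
  exact this

end helpers

theorem omega_well_defined (n : ℕ) :
    ∃ ω : G2d n →* Qgrp n,
      (∀ a : GenG n, ω (PresentedGroup.of (Sum.inl a)) =
        QuotientGroup.mk (PresentedGroup.of (embedGen n a))) ∧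
      (∀ i : Fin n, ω (PresentedGroup.of (Sum.inr i)) =
        QuotientGroup.mk (PresentedGroup.of (tauGen n i))) := by
  set f : GenD n → Qgrp n := fun x =>
    Sum.rec (fun a => QuotientGroup.mk (PresentedGroup.of (embedGen n a)))
      (fun i => QuotientGroup.mk (PresentedGroup.of (tauGen n i))) x with hf
  have key : ∀ r ∈ relsD n, FreeGroup.lift f r = 1 := by
    intro r hr
    rcases hr with ⟨a, rfl⟩ | ⟨a, b, hcard, rfl⟩ | ⟨i, j, k, hij, hik, hjk, rfl⟩ |
      ⟨i, rfl⟩ | ⟨i, j, hij, rfl⟩ | ⟨i, j, hlt, rfl⟩ | ⟨a, k, hk1, hk2, rfl⟩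
    · simp only [map_mul, FreeGroup.lift_apply_of, hf]
      rw [← QuotientGroup.mk_mul, sqG, QuotientGroup.mk_one]
    · simp only [map_mul, map_inv, FreeGroup.lift_apply_of, hf]
      rw [mul_inv_eq_one]
      have h4 : ({(embedGen n a).1.1, (embedGen n a).1.2, (embedGen n b).1.1,
          (embedGen n b).1.2} : Finset (Fin (n+1))).card = 4 := by
        show ({a.1.1.castSucc, a.1.2.castSucc, b.1.1.castSucc, b.1.2.castSucc} :
          Finset (Fin (n+1))).card = 4
        have himg : ({a.1.1.castSucc, a.1.2.castSucc, b.1.1.castSucc, b.1.2.castSucc} :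
            Finset (Fin (n+1))) =
            ({a.1.1, a.1.2, b.1.1, b.1.2} : Finset (Fin n)).image Fin.castSucc := by
          simp [Finset.image_insert]
        rw [himg, Finset.card_image_of_injective _ (Fin.castSucc_injective n), hcard]
      have := farG (embedGen n a) (embedGen n b) h4
      rw [← QuotientGroup.mk_mul, ← QuotientGroup.mk_mul, this]
    · simp only [map_mul, map_inv, FreeGroup.lift_apply_of, hf]
      rw [mul_inv_eq_one]
      have := tripleG (n := n) (Fin.castSucc_lt_castSucc_iff.mpr hij)
        (Fin.castSucc_lt_castSucc_iff.mpr hik) (Fin.castSucc_lt_castSucc_iff.mpr hjk)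
      simp only [← QuotientGroup.mk_mul]
      exact congrArg _ this
    · simp only [map_mul, FreeGroup.lift_apply_of, hf]
      rw [← QuotientGroup.mk_mul, sqG, QuotientGroup.mk_one]
    · simp only [map_mul, map_inv, FreeGroup.lift_apply_of, hf]
      rw [mul_inv_eq_one]
      exact tauComm hij
    · simp only [map_mul, map_inv, FreeGroup.lift_apply_of, hf]
      rw [mul_inv_eq_one]
      -- y z x z y = x  where x = a_{ij}, y = τ_i, z = τ_j
      set x := (QuotientGroup.mk (PresentedGroup.of (embedGen n ⟨(i,j),hlt⟩)) : Qgrp n)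
      set y := (QuotientGroup.mk (PresentedGroup.of (tauGen n i)) : Qgrp n)
      set z := (QuotientGroup.mk (PresentedGroup.of (tauGen n j)) : Qgrp n)
      have hx2 : x * x = 1 := by
        rw [← QuotientGroup.mk_mul, sqG, QuotientGroup.mk_one]
      have hy2 : y * y = 1 := by
        rw [← QuotientGroup.mk_mul, sqG, QuotientGroup.mk_one]
      have hz2 : z * z = 1 := by
        rw [← QuotientGroup.mk_mul, sqG, QuotientGroup.mk_one]
      have hyz : y * z = z * y := tauComm hlt.ne
      have htri : x * y * z = z * y * x := by
        have := tripleG (n := n) (Fin.castSucc_lt_castSucc_iff.mpr hlt)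
          (Fin.castSucc_lt_last i) (Fin.castSucc_lt_last j)
        have h2 := congrArg (QuotientGroup.mk : G2 (n+1) → Qgrp n) this
        simp only [QuotientGroup.mk_mul] at h2
        exact h2
      -- want y * z * x * z * y = x
      have key2 : y * z * x * z * y * x = 1 := by
        calc y * z * x * z * y * x = y * z * x * (z * y * x) := by group
          _ = y * z * x * (x * y * z) := by rw [← htri]
          _ = y * z * (x * x) * y * z := by group
          _ = y * (z * y) * z := by rw [hx2]; group
          _ = y * (y * z) * z := by rw [hyz]
          _ = (y * y) * (z * z) := by group
          _ = 1 := by rw [hy2, hz2, one_mul]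
      calc y * z * x * z * y = x⁻¹ := mul_eq_one_iff_eq_inv.mp key2
        _ = x := inv_eq_of_mul_eq_one_right hx2
    · simp only [map_mul, map_inv, FreeGroup.lift_apply_of, hf]
      rw [mul_inv_eq_one]
      have h4 : ({(embedGen n a).1.1, (embedGen n a).1.2, (tauGen n k).1.1,
          (tauGen n k).1.2} : Finset (Fin (n+1))).card = 4 := by
        show ({a.1.1.castSucc, a.1.2.castSucc, k.castSucc, Fin.last n} :
          Finset (Fin (n+1))).card = 4
        apply card4
        · exact fun h => absurd (Fin.castSucc_injective n h) a.2.ne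
        · exact fun h => absurd (Fin.castSucc_injective n h) hk1.symm
        · exact (Fin.castSucc_lt_last a.1.1).ne
        · exact fun h => absurd (Fin.castSucc_injective n h) hk2.symm
        · exact (Fin.castSucc_lt_last a.1.2).ne
        · exact (Fin.castSucc_lt_last k).ne
      have := farG (embedGen n a) (tauGen n k) h4
      rw [← QuotientGroup.mk_mul, ← QuotientGroup.mk_mul, this]
  refine ⟨PresentedGroup.toGroup key, fun a => ?_, fun i => ?_⟩
  · exact PresentedGroup.toGroup.of key
  · exact PresentedGroup.toGroup.of key
end

section
/- For each m ∈ {1,...,n+1}, the strand-deletion map ψ_m : G_{n+1}^2 → G_{n,d}^2 defined on generators by: ψ_m(a_{im}) = τ_i if i < m, ψ_m(a_{mj}) = τ_{j-1} if j > m, ψ_m(a_{ij}) = a_{i'j'} where i' = i if i < m and i' = i−1 if i > m (similarly for j'), whenever m ∉ {i,j}, is a well-defined group homomorphism. -/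
def drop {n : ℕ} (m : Fin (n+1)) (k : Fin (n+1)) (hk : k ≠ m) : Fin n :=
  if h : (k : ℕ) < (m : ℕ) then ⟨k, by have := m.isLt; omega⟩
  else ⟨(k : ℕ) - 1, by
    have h2 : (k : ℕ) ≠ (m : ℕ) := fun e => hk (Fin.ext e)
    have := k.isLt; omega⟩

theorem drop_lt {n : ℕ} (m : Fin (n+1)) {i j : Fin (n+1)} (hi : i ≠ m) (hj : j ≠ m) (h : i < j) :
    drop m i hi < drop m j hj := by
  have h1 : (i : ℕ) ≠ m := fun e => hi (Fin.ext e)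
  have h2 : (j : ℕ) ≠ m := fun e => hj (Fin.ext e)
  have h3 : (i : ℕ) < j := h
  have := j.isLt
  simp only [drop]
  split_ifs <;> simp only [Fin.mk_lt_mk] <;> omega

theorem drop_ne {n : ℕ} (m : Fin (n+1)) {i j : Fin (n+1)} (hi : i ≠ m) (hj : j ≠ m) (h : i ≠ j) :
    drop m i hi ≠ drop m j hj := by
  rcases lt_or_gt_of_ne h with h' | h'
  · exact (drop_lt m hi hj h').ne
  · exact (drop_lt m hj hi h').ne'

section Gd
variable {n : ℕ}

def Ad (a : GenG n) : G2d n := PresentedGroup.of (Sum.inl a)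
def Td (i : Fin n) : G2d n := PresentedGroup.of (Sum.inr i)

lemma relD_one {r : FreeGroup (GenD n)} (h : r ∈ relsD n) :
    PresentedGroup.mk (relsD n) r = 1 :=
  (QuotientGroup.eq_one_iff r).mpr (Subgroup.subset_normalClosure h)

lemma Ad_sq (a : GenG n) : Ad a * Ad a = 1 := by
  have h := relD_one (n := n) (Or.inl ⟨a, rfl⟩)
  rw [map_mul] at h
  exact h

lemma Td_sq (i : Fin n) : Td i * Td i = 1 := by
  have h := relD_one (n := n) (Or.inr (Or.inr (Or.inr (Or.inl ⟨i, rfl⟩))))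
  rw [map_mul] at h
  exact h

lemma Ad_comm (a b : GenG n)
    (hc : ({a.1.1, a.1.2, b.1.1, b.1.2} : Finset (Fin n)).card = 4) :
    Ad a * Ad b = Ad b * Ad a := by
  have h := relD_one (n := n) (Or.inr (Or.inl ⟨a, b, hc, rfl⟩))
  simp only [map_mul, map_inv] at h
  exact mul_inv_eq_one.mp h

lemma Td_comm {i j : Fin n} (h : i ≠ j) : Td i * Td j = Td j * Td i := by
  have h' := relD_one (n := n) (Or.inr (Or.inr (Or.inr (Or.inr (Or.inl ⟨i, j, h, rfl⟩)))))
  simp only [map_mul, map_inv] at h'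
  exact mul_inv_eq_one.mp h'

lemma tripleD {i j k : Fin n} (hij : i < j) (hik : i < k) (hjk : j < k) :
    Ad ⟨(i,j),hij⟩ * Ad ⟨(i,k),hik⟩ * Ad ⟨(j,k),hjk⟩ =
    Ad ⟨(j,k),hjk⟩ * Ad ⟨(i,k),hik⟩ * Ad ⟨(i,j),hij⟩ := by
  have h := relD_one (n := n) (Or.inr (Or.inr (Or.inl ⟨i, j, k, hij, hik, hjk, rfl⟩)))
  simp only [map_mul, map_inv] at h
  exact mul_inv_eq_one.mp h

lemma tau_relD {i j : Fin n} (h : i < j) :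
    Td i * Td j * Ad ⟨(i,j),h⟩ * Td j * Td i = Ad ⟨(i,j),h⟩ := by
  have h' := relD_one (n := n)
    (Or.inr (Or.inr (Or.inr (Or.inr (Or.inr (Or.inl ⟨i, j, h, rfl⟩))))))
  simp only [map_mul, map_inv] at h'
  exact mul_inv_eq_one.mp h'

lemma Ad_Td_comm (a : GenG n) (k : Fin n) (h1 : k ≠ a.1.1) (h2 : k ≠ a.1.2) :
    Ad a * Td k = Td k * Ad a := by
  have h := relD_one (n := n)
    (Or.inr (Or.inr (Or.inr (Or.inr (Or.inr (Or.inr ⟨a, k, h1, h2, rfl⟩))))))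
  simp only [map_mul, map_inv] at h
  exact mul_inv_eq_one.mp h

end Gd

lemma key_lemma {G : Type*} [Group G] {u v A : G} (hu : u*u = 1) (hv : v*v = 1)
    (hc : u*v = v*u) (h6 : u*v*A*v*u = A) :
    (u*v*A = A*v*u) ∧ (u*A*v = v*A*u) ∧ (A*u*v = v*u*A) := by
  have d1' : u*v*A = A*u*v := by
    have e1 : (u*v*A)*(v*u) = A := by
      rw [show (u*v*A)*(v*u) = u*v*A*v*u by group]; exact h6
    have e2 : (A*u*v)*(v*u) = A := by
      rw [show (A*u*v)*(v*u) = A*u*(v*v)*u by group, hv,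
        show A*u*1*u = A*(u*u) by group, hu, mul_one]
    exact mul_right_cancel (e1.trans e2.symm)
  refine ⟨?_, ?_, ?_⟩
  · rw [d1', mul_assoc, hc, ← mul_assoc]
  · have e1 : v*(u*A*v)*u = A := by
      rw [show v*(u*A*v)*u = v*u*A*v*u by group, ← hc]; exact h6
    have e2 : v*(v*A*u)*u = A := by
      rw [show v*(v*A*u)*u = v*v*(A*(u*u)) by group, hu, mul_one, hv, one_mul]
    exact mul_left_cancel (mul_right_cancel (e1.trans e2.symm))
  · rw [← d1', hc]

lemma card_le3 {α : Type*} [DecidableEq α] (x y z : α) : ({x,y,z} : Finset α).card ≤ 3 := by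
  refine le_trans (Finset.card_insert_le _ _) ?_
  have := Finset.card_insert_le y ({z} : Finset α)
  simp at this ⊢
  omega

lemma card4_iff {α : Type*} [DecidableEq α] {a b c d : α}
    (h : ({a,b,c,d} : Finset α).card = 4) :
    a ≠ b ∧ a ≠ c ∧ a ≠ d ∧ b ≠ c ∧ b ≠ d ∧ c ≠ d := by
  refine ⟨?_, ?_, ?_, ?_, ?_, ?_⟩ <;> rintro rfl
  · have h1 : ({a,a,c,d} : Finset α) ⊆ {a,c,d} := by intro x hx; simp at hx ⊢; tauto
    have := (Finset.card_le_card h1).trans (card_le3 a c d); omega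
  · have h1 : ({a,b,a,d} : Finset α) ⊆ {a,b,d} := by intro x hx; simp at hx ⊢; tauto
    have := (Finset.card_le_card h1).trans (card_le3 a b d); omega
  · have h1 : ({a,b,c,a} : Finset α) ⊆ {a,b,c} := by intro x hx; simp at hx ⊢; tauto
    have := (Finset.card_le_card h1).trans (card_le3 a b c); omega
  · have h1 : ({a,b,b,d} : Finset α) ⊆ {a,b,d} := by intro x hx; simp at hx ⊢; tauto
    have := (Finset.card_le_card h1).trans (card_le3 a b d); omega
  · have h1 : ({a,b,c,b} : Finset α) ⊆ {a,b,c} := by intro x hx; simp at hx ⊢; tauto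
    have := (Finset.card_le_card h1).trans (card_le3 a b c); omega
  · have h1 : ({a,b,c,c} : Finset α) ⊆ {a,b,c} := by intro x hx; simp at hx ⊢; tauto
    have := (Finset.card_le_card h1).trans (card_le3 a b c); omega

lemma card4_of {α : Type*} [DecidableEq α] {a b c d : α} (h1 : a≠b) (h2 : a≠c) (h3 : a≠d)
    (h4 : b≠c) (h5 : b≠d) (h6 : c≠d) : ({a,b,c,d} : Finset α).card = 4 := by
  rw [Finset.card_insert_of_notMem (by simp [h1,h2,h3]),
    Finset.card_insert_of_notMem (by simp [h4,h5]),
    Finset.card_insert_of_notMem (by simp [h6]), Finset.card_singleton]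

section Fmap
variable {n : ℕ}

def fmap (m : Fin (n+1)) (a : GenG (n+1)) : G2d n :=
  if hi : a.1.1 = m then
    Td (drop m a.1.2 (by rw [← hi]; exact a.2.ne'))
  else if hj : a.1.2 = m then Td (drop m a.1.1 hi)
  else Ad ⟨(drop m a.1.1 hi, drop m a.1.2 hj), drop_lt m hi hj a.2⟩

variable {m : Fin (n+1)}

lemma fmap_case1 {i j : Fin (n+1)} (h : i < j) (hi : i ≠ m) (hj : j = m) :
    fmap m ⟨(i,j),h⟩ = Td (drop m i hi) := by
  simp only [fmap]
  rw [dif_neg hi, dif_pos hj]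

lemma fmap_case2 {i j : Fin (n+1)} (h : i < j) (hi : i = m) (hj : j ≠ m) :
    fmap m ⟨(i,j),h⟩ = Td (drop m j hj) := by
  simp only [fmap]
  rw [dif_pos hi]

lemma fmap_case3 {i j : Fin (n+1)} (h : i < j) (hi : i ≠ m) (hj : j ≠ m) :
    fmap m ⟨(i,j),h⟩ = Ad ⟨(drop m i hi, drop m j hj), drop_lt m hi hj h⟩ := by
  simp only [fmap]
  rw [dif_neg hi, dif_neg hj]

lemma fmap_sq (a : GenG (n+1)) : fmap m a * fmap m a = 1 := by
  obtain ⟨⟨i,j⟩, h⟩ := a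
  by_cases hi : i = m
  · rw [fmap_case2 h hi (by rw [← hi]; exact h.ne')]; exact Td_sq _
  · by_cases hj : j = m
    · rw [fmap_case1 h hi hj]; exact Td_sq _
    · rw [fmap_case3 h hi hj]; exact Ad_sq _

lemma fmap_comm (a b : GenG (n+1))
    (hc : ({a.1.1, a.1.2, b.1.1, b.1.2} : Finset (Fin (n+1))).card = 4) :
    fmap m a * fmap m b = fmap m b * fmap m a := by
  obtain ⟨⟨i1,j1⟩, h1⟩ := a
  obtain ⟨⟨i2,j2⟩, h2⟩ := b
  obtain ⟨d1, d2, d3, d4, d5, d6⟩ := card4_iff hc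
  by_cases e1 : i1 = m
  · have hj1 : j1 ≠ m := by rw [← e1]; exact h1.ne'
    have hi2 : i2 ≠ m := by rw [← e1]; exact d2.symm
    have hj2 : j2 ≠ m := by rw [← e1]; exact d3.symm
    rw [fmap_case2 h1 e1 hj1, fmap_case3 h2 hi2 hj2]
    exact (Ad_Td_comm _ _ (drop_ne m hj1 hi2 d4) (drop_ne m hj1 hj2 d5)).symm
  · by_cases e2 : j1 = m
    · have hi1 : i1 ≠ m := e1
      have hi2 : i2 ≠ m := by rw [← e2]; exact d4.symm
      have hj2 : j2 ≠ m := by rw [← e2]; exact d5.symm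
      rw [fmap_case1 h1 hi1 e2, fmap_case3 h2 hi2 hj2]
      exact (Ad_Td_comm _ _ (drop_ne m hi1 hi2 d2) (drop_ne m hi1 hj2 d3)).symm
    · by_cases e3 : i2 = m
      · have hj2 : j2 ≠ m := by rw [← e3]; exact h2.ne'
        rw [fmap_case2 h2 e3 hj2, fmap_case3 h1 e1 e2]
        exact Ad_Td_comm _ _ (drop_ne m hj2 e1 d3.symm) (drop_ne m hj2 e2 d5.symm)
      · by_cases e4 : j2 = m
        · rw [fmap_case1 h2 e3 e4, fmap_case3 h1 e1 e2]
          exact Ad_Td_comm _ _ (drop_ne m e3 e1 d2.symm) (drop_ne m e3 e2 d4.symm)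
        · rw [fmap_case3 h1 e1 e2, fmap_case3 h2 e3 e4]
          exact Ad_comm _ _ (card4_of (drop_ne m e1 e2 d1) (drop_ne m e1 e3 d2)
            (drop_ne m e1 e4 d3) (drop_ne m e2 e3 d4) (drop_ne m e2 e4 d5)
            (drop_ne m e3 e4 d6))

lemma fmap_triple {i j k : Fin (n+1)} (hij : i < j) (hik : i < k) (hjk : j < k) :
    fmap m ⟨(i,j),hij⟩ * fmap m ⟨(i,k),hik⟩ * fmap m ⟨(j,k),hjk⟩ =
    fmap m ⟨(j,k),hjk⟩ * fmap m ⟨(i,k),hik⟩ * fmap m ⟨(i,j),hij⟩ := by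
  by_cases ei : i = m
  · have hj : j ≠ m := by rw [← ei]; exact hij.ne'
    have hk : k ≠ m := by rw [← ei]; exact hik.ne'
    rw [fmap_case2 hij ei hj, fmap_case2 hik ei hk, fmap_case3 hjk hj hk]
    obtain ⟨d1, -, -⟩ := key_lemma (Td_sq (drop m j hj)) (Td_sq (drop m k hk))
      (Td_comm (drop_ne m hj hk hjk.ne)) (tau_relD (drop_lt m hj hk hjk))
    exact d1
  · by_cases ej : j = m
    · have hi : i ≠ m := ei
      have hk : k ≠ m := by rw [← ej]; exact hjk.ne'
      rw [fmap_case1 hij hi ej, fmap_case3 hik hi hk, fmap_case2 hjk ej hk]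
      obtain ⟨-, d2, -⟩ := key_lemma (Td_sq (drop m i hi)) (Td_sq (drop m k hk))
        (Td_comm (drop_ne m hi hk hik.ne)) (tau_relD (drop_lt m hi hk hik))
      exact d2
    · by_cases ek : k = m
      · rw [fmap_case3 hij ei ej, fmap_case1 hik ei ek, fmap_case1 hjk ej ek]
        obtain ⟨-, -, d3⟩ := key_lemma (Td_sq (drop m i ei)) (Td_sq (drop m j ej))
          (Td_comm (drop_ne m ei ej hij.ne)) (tau_relD (drop_lt m ei ej hij))
        exact d3
      · rw [fmap_case3 hij ei ej, fmap_case3 hik ei ek, fmap_case3 hjk ej ek]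
        exact tripleD _ _ _

end Fmap

theorem psi_m_well_defined (n : ℕ) (m : Fin (n+1)) :
    ∃ ψ : G2 (n+1) →* G2d n,
      ∀ (i j : Fin (n+1)) (h : i < j),
        (∀ hi : i ≠ m, j = m →
          ψ (PresentedGroup.of ⟨(i,j),h⟩) = PresentedGroup.of (Sum.inr (drop m i hi))) ∧
        (∀ hj : j ≠ m, i = m →
          ψ (PresentedGroup.of ⟨(i,j),h⟩) = PresentedGroup.of (Sum.inr (drop m j hj))) ∧
        (∀ (hi : i ≠ m) (hj : j ≠ m),
          ψ (PresentedGroup.of ⟨(i,j),h⟩) =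
            PresentedGroup.of (Sum.inl ⟨(drop m i hi, drop m j hj), drop_lt m hi hj h⟩)) := by
  have main : ∀ r ∈ relsG (n+1), FreeGroup.lift (fmap m) r = 1 := by
    rintro r (⟨a, rfl⟩ | ⟨a, b, hc, rfl⟩ | ⟨i, j, k, hij, hik, hjk, rfl⟩)
    · simp only [map_mul, FreeGroup.lift_apply_of]
      exact fmap_sq a
    · simp only [map_mul, map_inv, FreeGroup.lift_apply_of]
      rw [mul_inv_eq_one]
      exact fmap_comm a b hc
    · simp only [map_mul, map_inv, FreeGroup.lift_apply_of]
      rw [mul_inv_eq_one]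
      exact fmap_triple hij hik hjk
  refine ⟨PresentedGroup.toGroup main, fun i j h => ⟨?_, ?_, ?_⟩⟩
  · intro hi hj
    rw [PresentedGroup.toGroup.of, fmap_case1 h hi hj]
    rfl
  · intro hj hi
    rw [PresentedGroup.toGroup.of, fmap_case2 h hi hj]
    rfl
  · intro hi hj
    rw [PresentedGroup.toGroup.of, fmap_case3 h hi hj]
    rfl
end
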